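/- Let p be prime and let f be a modular function on Γ₀(p). Then p·(U_p f)(-1/(pτ)) = p·(U_p f)(pτ) + f(-1/(p²τ)) - f(τ), where U_p f(τ) = (1/p) Σ_{ℓ=0}^{p-1} f((τ+ℓ)/p). -/

import Mathlib

open Finset

noncomputable def UpFn (p : ℕ) (f : ℂ → ℂ) (z : ℂ) : ℂ :=
  (1 / (p : ℂ)) * ∑ ℓ ∈ range p, f ((z + ℓ) / p)

/-- the partner index: `m = -ℓ⁻¹ mod p`. -/
def mfun (p ℓ : ℕ) : ℕ := (-(ℓ : ZMod p)⁻¹).val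

lemma mfun_spec (p : ℕ) (hp : p.Prime) {ℓ : ℕ} (hℓ : ℓ ∈ Ico 1 p) :
    mfun p ℓ ∈ Ico 1 p ∧ (p : ℤ) ∣ ((ℓ : ℤ) * mfun p ℓ + 1) ∧ mfun p (mfun p ℓ) = ℓ := by
  haveI : Fact p.Prime := ⟨hp⟩
  obtain ⟨h1, h2⟩ := mem_Ico.mp hℓ
  have hℓ0 : (ℓ : ZMod p) ≠ 0 := by
    rw [Ne, ZMod.natCast_eq_zero_iff]
    exact fun h => absurd (Nat.le_of_dvd (by omega) h) (by omega)
  set x : ZMod p := -(ℓ : ZMod p)⁻¹ with hx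
  have hx0 : x ≠ 0 := neg_ne_zero.mpr (inv_ne_zero hℓ0)
  have hmv : mfun p ℓ = x.val := rfl
  have hmem : mfun p ℓ ∈ Ico 1 p := by
    rw [hmv]
    refine mem_Ico.mpr ⟨?_, ZMod.val_lt x⟩
    have := (ZMod.val_eq_zero x).not.mpr hx0
    omega
  refine ⟨hmem, ?_, ?_⟩
  · have : ((ℓ * mfun p ℓ + 1 : ℕ) : ZMod p) = 0 := by
      push_cast
      rw [mfun, ZMod.natCast_val, ZMod.cast_id]
      simp [mul_neg, mul_inv_cancel₀ hℓ0]
    have := (ZMod.natCast_eq_zero_iff _ _).mp this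
    exact_mod_cast Int.natCast_dvd_natCast.mpr this
  · rw [mfun, mfun, ZMod.natCast_val, ZMod.cast_id, ← hx, inv_neg, inv_inv, neg_neg,
      ZMod.val_cast_of_lt h2]

theorem up_at_zero_formula (p : ℕ) (hp : p.Prime) (f : ℂ → ℂ)
    (hhol : ∀ τ : ℂ, 0 < τ.im → DifferentiableAt ℂ f τ)
    (hinv : ∀ γ : Matrix.SpecialLinearGroup (Fin 2) ℤ, γ ∈ CongruenceSubgroup.Gamma0 p →
      ∀ τ : ℂ, 0 < τ.im →
        f ((((γ : Matrix (Fin 2) (Fin 2) ℤ) 0 0 : ℂ) * τ + ((γ : Matrix (Fin 2) (Fin 2) ℤ) 0 1 : ℂ)) /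
          (((γ : Matrix (Fin 2) (Fin 2) ℤ) 1 0 : ℂ) * τ + ((γ : Matrix (Fin 2) (Fin 2) ℤ) 1 1 : ℂ))) = f τ) :
    ∀ τ : ℂ, 0 < τ.im →
      (p : ℂ) * UpFn p f (-1 / (p * τ)) =
        (p : ℂ) * UpFn p f (p * τ) + f (-1 / (p ^ 2 * τ)) - f τ := by
  intro τ hτ
  have hp0 : (p : ℂ) ≠ 0 := Nat.cast_ne_zero.mpr hp.pos.ne'
  have hτ0 : τ ≠ 0 := by intro h; rw [h] at hτ; simp at hτ
  have hppos : 0 < p := hp.pos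
  -- cancel the 1/p
  have hc : ∀ z : ℂ, (p : ℂ) * UpFn p f z = ∑ ℓ ∈ range p, f ((z + ℓ) / p) := by
    intro z; rw [UpFn]; field_simp
  rw [hc, hc]
  -- split off ℓ = 0 terms
  rw [range_eq_Ico, Finset.sum_eq_sum_Ico_succ_bot hppos, Finset.sum_eq_sum_Ico_succ_bot hppos]
  have e1 : ((-1 / ((p:ℂ) * τ) + (0:ℕ)) / p) = -1 / ((p:ℂ) ^ 2 * τ) := by
    push_cast; field_simp; ring
  have e2 : (((p:ℂ) * τ + (0:ℕ)) / p) = τ := by push_cast; field_simp; simp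
  rw [e1, e2]
  -- key: each remaining LHS term equals an RHS term
  have key : ∀ ℓ ∈ Ico 1 p,
      f ((-1 / ((p:ℂ) * τ) + ℓ) / p) = f (((p:ℂ) * τ + (mfun p ℓ : ℕ)) / p) := by
    intro ℓ hℓ
    obtain ⟨hmem, hdvd, _⟩ := mfun_spec p hp hℓ
    obtain ⟨k, hk⟩ := hdvd
    set m := mfun p ℓ
    -- the matrix
    have hdet : Matrix.det !![(ℓ : ℤ), -k; (p : ℤ), -(m : ℤ)] = 1 := by
      rw [Matrix.det_fin_two_of]; linarith [hk]
    set γ : Matrix.SpecialLinearGroup (Fin 2) ℤ := ⟨_, hdet⟩ with hγ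
    have hγmem : γ ∈ CongruenceSubgroup.Gamma0 p := by
      rw [CongruenceSubgroup.Gamma0_mem]
      simp [hγ]
    set w : ℂ := τ + (m : ℂ) / p with hw
    have hwim : 0 < w.im := by
      have : ((m : ℂ) / p).im = 0 := by
        rw [Complex.div_im]; simp
      rw [hw, Complex.add_im, this, add_zero]; exact hτ
    have := hinv γ hγmem w hwim
    have hkC : (ℓ : ℂ) * m + 1 = p * k := by exact_mod_cast congrArg (fun z : ℤ => (z : ℂ)) hk
    have hγ00 : ((γ : Matrix (Fin 2) (Fin 2) ℤ) 0 0 : ℂ) = (ℓ : ℂ) := by simp [hγ]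
    have hγ01 : ((γ : Matrix (Fin 2) (Fin 2) ℤ) 0 1 : ℂ) = -(k : ℂ) := by simp [hγ]
    have hγ10 : ((γ : Matrix (Fin 2) (Fin 2) ℤ) 1 0 : ℂ) = (p : ℂ) := by simp [hγ]
    have hγ11 : ((γ : Matrix (Fin 2) (Fin 2) ℤ) 1 1 : ℂ) = -(m : ℂ) := by simp [hγ]
    rw [hγ00, hγ01, hγ10, hγ11] at this
    have hleft : ((ℓ : ℂ) * w + -(k : ℂ)) / ((p : ℂ) * w + -(m : ℂ))
        = (-1 / ((p:ℂ) * τ) + ℓ) / p := by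
      rw [hw]
      have hden : (p : ℂ) * (τ + (m : ℂ) / p) + -(m : ℂ) = p * τ := by field_simp; ring
      rw [hden]
      rw [div_eq_div_iff (mul_ne_zero hp0 hτ0) hp0]
      field_simp
      linear_combination hkC
    have hright : w = ((p:ℂ) * τ + (m : ℂ)) / p := by rw [hw]; field_simp
    rw [hleft, hright] at this
    exact this
  rw [Finset.sum_congr rfl key]
  -- re-index via the involution mfun
  have hbij : ∑ ℓ ∈ Ico 1 p, f (((p:ℂ) * τ + (mfun p ℓ : ℕ)) / p)
      = ∑ m ∈ Ico 1 p, f (((p:ℂ) * τ + (m : ℕ)) / p) := by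
    apply Finset.sum_nbij' (fun ℓ => mfun p ℓ) (fun m => mfun p m)
    · intro a ha; exact (mfun_spec p hp ha).1
    · intro a ha; exact (mfun_spec p hp ha).1
    · intro a ha; exact (mfun_spec p hp ha).2.2
    · intro a ha; exact (mfun_spec p hp ha).2.2
    · intro a ha; rfl
  rw [hbij]
  ring
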